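/- Let K be a field and A an algebra over K (a K-vector space with a bilinear product, no identities assumed). Suppose A = ⊕_{j∈J} I_j is a direct sum of ideals I_j, each of which is simple as an algebra. For each j ∈ J fix a linear basis B_j of the subspace I_j, and let B be the (disjoint) union of the B_j, which is a linear basis of A. Then B is a semi-division basis of A. -/

import Mathlib

/-!  Nonassociative algebras as vector spaces with a bilinear product. -/

variable {K V : Type*} [Field K] [AddCommGroup V] [Module K V]

/-- `I` is a (two-sided) ideal of the algebra `(V, mul)`. -/
def IsIdeal (mul : V →ₗ[K] V →ₗ[K] V) (I : Submodule K V) : Prop :=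
  ∀ a : V, ∀ x ∈ I, mul a x ∈ I ∧ mul x a ∈ I

/-- The ideal of `(V, mul)` generated by an element `c`. -/
def idealGen (mul : V →ₗ[K] V →ₗ[K] V) (c : V) : Submodule K V :=
  sInf {I : Submodule K V | IsIdeal mul I ∧ c ∈ I}

/-- The annihilator `{x : x·A = A·x = 0}` of `(V, mul)` is zero. -/
def HasZeroAnn (mul : V →ₗ[K] V →ₗ[K] V) : Prop :=
  ∀ x : V, (∀ a : V, mul x a = 0 ∧ mul a x = 0) → x = 0

/-- `(V, mul)` is a simple algebra: nonzero product, only trivial ideals. -/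
def IsSimpleAlgebra (mul : V →ₗ[K] V →ₗ[K] V) : Prop :=
  mul ≠ 0 ∧ ∀ I : Submodule K V, IsIdeal mul I → I = ⊥ ∨ I = ⊤

/-- `I` is an ideal of `(V, mul)` which is simple as an algebra (with the
restricted product): nonzero product, and its only ideals are `0` and `I`. -/
def IsSimpleIdeal (mul : V →ₗ[K] V →ₗ[K] V) (I : Submodule K V) : Prop :=
  IsIdeal mul I ∧ (∃ x ∈ I, ∃ y ∈ I, mul x y ≠ 0) ∧
    ∀ J : Submodule K V, J ≤ I →
      (∀ a ∈ I, ∀ x ∈ J, mul a x ∈ J ∧ mul x a ∈ J) → J = ⊥ ∨ J = I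

/-- `(V, mul)` is semisimple: it is the direct sum of a family of ideals,
each of which is simple as an algebra. -/
def IsSemisimple (mul : V →ₗ[K] V →ₗ[K] V) : Prop :=
  ∃ 𝒮 : Set (Submodule K V), (∀ I ∈ 𝒮, IsSimpleIdeal mul I) ∧
    sSupIndep 𝒮 ∧ sSup 𝒮 = ⊤

variable {ι : Type*}

/-- The set `S_{e_i}` attached to a basis element `e_i = b i`. -/
def Sset (mul : V →ₗ[K] V →ₗ[K] V) (b : Module.Basis ι K V) (i : ι) : Set V :=
  {v | ∃ j : ι, v = b j ∧ (mul (b i) (b j) ≠ 0 ∨ mul (b j) (b i) ≠ 0)}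

/-- `B` is an i-division basis. -/
def IsIDivisionBasis (mul : V →ₗ[K] V →ₗ[K] V) (b : Module.Basis ι K V) : Prop :=
  ∀ (i : ι) (x : V),
    (mul (b i) x ≠ 0 →
      b i ∈ idealGen mul (mul (b i) x) ∧ x ∈ idealGen mul (mul (b i) x)) ∧
    (mul x (b i) ≠ 0 →
      b i ∈ idealGen mul (mul x (b i)) ∧ x ∈ idealGen mul (mul x (b i)))

/-- `B` is a weak-division basis: the i-division condition is only required
for `x` in `M_{e_i}`, the span of `S_{e_i}`. -/
def IsWeakDivisionBasis (mul : V →ₗ[K] V →ₗ[K] V) (b : Module.Basis ι K V) : Prop :=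
  ∀ i : ι, ∀ x ∈ Submodule.span K (Sset mul b i),
    (mul (b i) x ≠ 0 →
      b i ∈ idealGen mul (mul (b i) x) ∧ x ∈ idealGen mul (mul (b i) x)) ∧
    (mul x (b i) ≠ 0 →
      b i ∈ idealGen mul (mul x (b i)) ∧ x ∈ idealGen mul (mul x (b i)))

/-- The set `P_{e_i}` attached to a basis element `e_i = b i`, where
`b.coord i` is the coordinate functional `p_{e_i}`. -/
def Pset (mul : V →ₗ[K] V →ₗ[K] V) (b : Module.Basis ι K V) (i : ι) : Set V :=
  {v | ∃ j : ι, v = b j ∧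
    ((∃ r : ι, b.coord i (mul (b j) (b r)) ≠ 0) ∨
     (∃ s : ι, b.coord i (mul (b s) (b j)) ≠ 0))}

/-- The set `P_{e_i}·P_{e_i}` of products of pairs of elements of `P_{e_i}`. -/
def PPset (mul : V →ₗ[K] V →ₗ[K] V) (b : Module.Basis ι K V) (i : ι) : Set V :=
  {v | ∃ x ∈ Pset mul b i, ∃ y ∈ Pset mul b i, v = mul x y}

/-- `B` is a semi-division basis. -/
def IsSemiDivisionBasis (mul : V →ₗ[K] V →ₗ[K] V) (b : Module.Basis ι K V) : Prop :=
  IsWeakDivisionBasis mul b ∧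
  ∀ i : ι, ∀ x ∈ PPset mul b i, ∀ e ∈ Sset mul b i,
    (mul x e ≠ 0 →
      e ∈ idealGen mul (mul x e) ∧ x ∈ idealGen mul (mul x e)) ∧
    (mul e x ≠ 0 →
      e ∈ idealGen mul (mul e x) ∧ x ∈ idealGen mul (mul e x))

section Aux

variable (mul : V →ₗ[K] V →ₗ[K] V)

lemma isIdeal_idealGen (c : V) : IsIdeal mul (idealGen mul c) := by
  intro a x hx
  simp only [idealGen, Submodule.mem_sInf] at hx ⊢
  exact ⟨fun p hp => (hp.1 a x (hx p hp)).1, fun p hp => (hp.1 a x (hx p hp)).2⟩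

lemma self_mem_idealGen (c : V) : c ∈ idealGen mul c := by
  simp only [idealGen, Submodule.mem_sInf]
  exact fun p hp => hp.2

/-- If `I` is a simple ideal and `0 ≠ c ∈ I` then `I ⊆ idealGen c`. -/
lemma le_idealGen_of_simple {I : Submodule K V} (hI : IsSimpleIdeal mul I)
    {c : V} (hc : c ∈ I) (hc0 : c ≠ 0) : I ≤ idealGen mul c := by
  have h := hI.2.2 (idealGen mul c ⊓ I) inf_le_right ?_
  · rcases h with h | h
    · exact absurd (h ▸ Submodule.mem_inf.mpr ⟨self_mem_idealGen mul c, hc⟩) (by simpa)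
    · exact h ▸ inf_le_left
  · intro a ha x hx
    rcases Submodule.mem_inf.mp hx with ⟨hx1, hx2⟩
    exact ⟨Submodule.mem_inf.mpr ⟨(isIdeal_idealGen mul c a x hx1).1,
        (hI.1 a x hx2).1⟩,
      Submodule.mem_inf.mpr ⟨(isIdeal_idealGen mul c a x hx1).2,
        (hI.1 a x hx2).2⟩⟩

variable {J : Type*} {I : J → Submodule K V}

lemma inf_eq_zero_of_ne (hind : iSupIndep I) {j j' : J} (h : j ≠ j')
    {x : V} (hx : x ∈ I j) (hx' : x ∈ I j') : x = 0 := by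
  have hle : I j' ≤ ⨆ k, ⨆ _ : k ≠ j, I k :=
    le_iSup₂ (f := fun k (_ : k ≠ j) => I k) j' (Ne.symm h)
  exact Submodule.disjoint_def.mp (hind j) x hx (hle hx')

lemma mul_eq_zero_of_ne_ideal (hind : iSupIndep I)
    (hid : ∀ j, IsIdeal mul (I j)) {j j' : J} (h : j ≠ j')
    {x y : V} (hx : x ∈ I j) (hy : y ∈ I j') : mul x y = 0 :=
  inf_eq_zero_of_ne hind h ((hid j y x hx).2 : mul x y ∈ I j)
    ((hid j' x y hy).1 : mul x y ∈ I j')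

/-- If `v ∈ I m` and the `i`-th coordinate of `v` is nonzero, then `b i ∈ I m`. -/
lemma mem_of_coord_ne_zero (hind : iSupIndep I) (b : Module.Basis ι K V)
    (hb : ∀ i : ι, ∃ j : J, b i ∈ I j) {m : J} {v : V} (hv : v ∈ I m)
    {i : ι} (h : b.coord i v ≠ 0) : b i ∈ I m := by
  classical
  by_contra hbi
  apply h
  set f := b.repr v with hf
  set S : Finset ι := f.support.filter (fun k => b k ∈ I m) with hS
  have hw : (∑ k ∈ S, f k • b k) ∈ I m :=
    Submodule.sum_mem _ fun k hk => Submodule.smul_mem _ _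
      (by simpa [hS] using (Finset.mem_filter.mp hk).2)
  have hvw : v - ∑ k ∈ S, f k • b k ∈ ⨆ k, ⨆ _ : k ≠ m, I k := by
    have hv' : v = ∑ k ∈ f.support, f k • b k := by
      conv_lhs => rw [← b.linearCombination_repr v]
      rw [Finsupp.linearCombination_apply, Finsupp.sum]
    have : v - ∑ k ∈ S, f k • b k = ∑ k ∈ f.support \ S, f k • b k := by
      rw [hv', sub_eq_iff_eq_add]
      exact (Finset.sum_sdiff (Finset.filter_subset _ _)).symm
    rw [this]
    refine Submodule.sum_mem _ fun k hk => Submodule.smul_mem _ _ ?_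
    obtain ⟨jk, hjk⟩ := hb k
    have hkm : jk ≠ m := by
      rintro rfl
      exact (Finset.mem_sdiff.mp hk).2
        (Finset.mem_filter.mpr ⟨(Finset.mem_sdiff.mp hk).1, hjk⟩)
    exact (le_iSup₂ (f := fun k (_ : k ≠ m) => I k) jk hkm) hjk
  have hz : v - ∑ k ∈ S, f k • b k = 0 :=
    Submodule.disjoint_def.mp (hind m) _ (Submodule.sub_mem _ hv hw) hvw
  have hveq : v = ∑ k ∈ S, f k • b k := sub_eq_zero.mp hz
  have hiS : i ∉ S := fun hi => hbi (Finset.mem_filter.mp hi).2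
  have : b.coord i v = ∑ k ∈ S, f k * (if k = i then 1 else 0) := by
    rw [hveq]
    simp [Module.Basis.coord_apply, map_sum, Finsupp.single_apply]
  rw [this]
  refine Finset.sum_eq_zero fun k hk => ?_
  rw [if_neg (fun hki : k = i => hiS (hki ▸ hk))]
  ring

end Aux

/-- If `A` is the internal direct sum of a family of ideals, each simple as an
algebra, then any basis of `A` obtained as the union of bases of the ideals
(equivalently, any basis each of whose elements lies in one of the ideals)
is a semi-division basis. -/
theorem semiDivisionBasis_of_directSum_of_simpleIdeals
    (mul : V →ₗ[K] V →ₗ[K] V) {J : Type*} (I : J → Submodule K V)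
    (hind : iSupIndep I) (hsup : iSup I = ⊤)
    (hsimple : ∀ j : J, IsSimpleIdeal mul (I j))
    (b : Module.Basis ι K V) (hb : ∀ i : ι, ∃ j : J, b i ∈ I j) :
    IsSemiDivisionBasis mul b := by
  classical
  have hid : ∀ j, IsIdeal mul (I j) := fun j => (hsimple j).1
  have hSsub : ∀ (i : ι) (j0 : J), b i ∈ I j0 → Sset mul b i ⊆ (I j0 : Set V) := by
    rintro i j0 hj0 v ⟨k, rfl, hk⟩
    obtain ⟨jk, hjk⟩ := hb k
    by_cases hmem : b k ∈ I j0
    · exact hmem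
    · exfalso
      have hne : j0 ≠ jk := fun h => hmem (h ▸ hjk)
      rcases hk with hk | hk
      · exact hk (mul_eq_zero_of_ne_ideal mul hind hid hne hj0 hjk)
      · exact hk (mul_eq_zero_of_ne_ideal mul hind hid hne.symm hjk hj0)
  have hPsub : ∀ (i : ι) (j0 : J), b i ∈ I j0 → Pset mul b i ⊆ (I j0 : Set V) := by
    rintro i j0 hj0 v ⟨k, rfl, hk⟩
    obtain ⟨m, hm⟩ := hb k
    have hbim : b i ∈ I m := by
      rcases hk with ⟨r, hr⟩ | ⟨s, hs⟩
      · exact mem_of_coord_ne_zero hind b hb ((hid m (b r) (b k) hm).2) hr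
      · exact mem_of_coord_ne_zero hind b hb ((hid m (b s) (b k) hm).1) hs
    by_cases hmj : m = j0
    · exact hmj ▸ hm
    · exact absurd (inf_eq_zero_of_ne hind hmj hbim hj0) (b.ne_zero i)
  have hPPsub : ∀ (i : ι) (j0 : J), b i ∈ I j0 → PPset mul b i ⊆ (I j0 : Set V) := by
    rintro i j0 hj0 v ⟨p, hp, q, hq, rfl⟩
    exact (hid j0 q p (hPsub i j0 hj0 hp)).2
  refine ⟨?_, ?_⟩
  · intro i x hx
    obtain ⟨j0, hj0⟩ := hb i
    have hxI : x ∈ I j0 := Submodule.span_le.mpr (hSsub i j0 hj0) hx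
    refine ⟨fun hne => ?_, fun hne => ?_⟩
    · have hle := le_idealGen_of_simple mul (hsimple j0) ((hid j0 (b i) x hxI).1) hne
      exact ⟨hle hj0, hle hxI⟩
    · have hle := le_idealGen_of_simple mul (hsimple j0) ((hid j0 (b i) x hxI).2) hne
      exact ⟨hle hj0, hle hxI⟩
  · intro i x hxPP e heS
    obtain ⟨j0, hj0⟩ := hb i
    have hxI : x ∈ I j0 := hPPsub i j0 hj0 hxPP
    have heI : e ∈ I j0 := hSsub i j0 hj0 heS
    refine ⟨fun hne => ?_, fun hne => ?_⟩
    · have hle := le_idealGen_of_simple mul (hsimple j0) ((hid j0 e x hxI).2) hne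
      exact ⟨hle heI, hle hxI⟩
    · have hle := le_idealGen_of_simple mul (hsimple j0) ((hid j0 e x hxI).1) hne
      exact ⟨hle heI, hle hxI⟩
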